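/- arXiv:1109.5987 — 3 statements merged into one kernel-verified Lean document; each statement's English description precedes it below -/
import Mathlib

section
/- Let H be a finite-dimensional complex inner product space, N ≥ 1, U : Fin N → (H →ₗ H) a family of unitary operators, M ≥ 1, i : Fin M → Fin N a sequence of indices, and for each m ∈ Fin M let σ_m be a permutation of Fin N with σ_m(0) = i_m. Define the stage operators A_m = P_{σ_m}⁻¹ ∘ (U₀ ⊗ ⋯ ⊗ U_{N−1}) ∘ P_{σ_m} on H^{⊗N}. Then for all ψ, v ∈ H there exists a family w : Fin N → H with w₀ = U_{i_{M−1}} ∘ ⋯ ∘ U_{i_1} ∘ U_{i_0} ψ such that (A_{M−1} ∘ ⋯ ∘ A_1 ∘ A_0)(ψ ⊗ v ⊗ ⋯ ⊗ v) = w₀ ⊗ w₁ ⊗ ⋯ ⊗ w_{N−1}. In particular, the output is a pure (unentangled) tensor whose slot-0 factor is the programmed product U_{i_{M−1}}⋯U_{i_0} ψ. -/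
/-- The stage operator `A_σ = P_σ⁻¹ ∘ (U₀ ⊗ ⋯ ⊗ U_{N-1}) ∘ P_σ` on the `N`-fold tensor
power `H^{⊗N}`, where `P_σ` is realized as `PiTensorProduct.reindex`. -/
noncomputable def stageOp {H : Type*} [NormedAddCommGroup H] [InnerProductSpace ℂ H]
    {N : ℕ} (U : Fin N → (H →ₗ[ℂ] H)) (σ : Equiv.Perm (Fin N)) :
    PiTensorProduct ℂ (fun _ : Fin N => H) →ₗ[ℂ] PiTensorProduct ℂ (fun _ : Fin N => H) :=
  (PiTensorProduct.reindex ℂ (fun _ : Fin N => H) σ).symm.toLinearMap ∘ₗ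
    PiTensorProduct.map U ∘ₗ
    (PiTensorProduct.reindex ℂ (fun _ : Fin N => H) σ).toLinearMap

lemma stageOp_tprod {H : Type*} [NormedAddCommGroup H] [InnerProductSpace ℂ H]
    {N : ℕ} (U : Fin N → (H →ₗ[ℂ] H)) (σ : Equiv.Perm (Fin N)) (f : Fin N → H) :
    stageOp U σ (PiTensorProduct.tprod ℂ f) =
      PiTensorProduct.tprod ℂ (fun j => U (σ j) (f j)) := by
  simp only [stageOp, LinearMap.comp_apply, LinearEquiv.coe_coe,
    PiTensorProduct.reindex_tprod, PiTensorProduct.map_tprod]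
  rw [LinearEquiv.symm_apply_eq, PiTensorProduct.reindex_tprod]
  congr 1
  funext j
  simp

lemma foldl_comp_eq {α : Type*} {V : Type*} [AddCommGroup V] [Module ℂ V]
    (A : α → (V →ₗ[ℂ] V)) (L : List α) (c : V →ₗ[ℂ] V) :
    L.foldl (fun acc m => A m ∘ₗ acc) c =
      (L.foldl (fun acc m => A m ∘ₗ acc) LinearMap.id) ∘ₗ c := by
  induction L generalizing c with
  | nil => simp
  | cons x xs ih =>
      simp only [List.foldl_cons]
      rw [ih, ih (A x ∘ₗ LinearMap.id)]
      simp [LinearMap.comp_assoc]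

/-- Correctness of the `M`-stage circuit for Task 1: if `σ_m 0 = i_m` for every stage `m`,
then applying `A_{M-1} ∘ ⋯ ∘ A_1 ∘ A_0` (with `A_m = P_{σ_m}⁻¹ ∘ (U₀ ⊗ ⋯ ⊗ U_{N-1}) ∘
P_{σ_m}`) to the pure tensor `ψ ⊗ v ⊗ ⋯ ⊗ v` yields a pure tensor `w₀ ⊗ ⋯ ⊗ w_{N-1}`
whose slot-`0` factor is the programmed product `w₀ = U_{i_{M-1}} ∘ ⋯ ∘ U_{i_1} ∘ U_{i_0} ψ`. -/
theorem staged_circuit_output {H : Type*} [NormedAddCommGroup H] [InnerProductSpace ℂ H]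
    [FiniteDimensional ℂ H] (N : ℕ) [NeZero N] (M : ℕ) (hM : 1 ≤ M)
    (U : Fin N → (H →ₗ[ℂ] H)) (hU : ∀ j, U j ∈ unitary (H →ₗ[ℂ] H))
    (i : Fin M → Fin N) (σ : Fin M → Equiv.Perm (Fin N)) (hσ : ∀ m, σ m 0 = i m)
    (ψ v : H) :
    ∃ w : Fin N → H,
      w 0 = ((List.finRange M).foldl (fun acc m => U (i m) ∘ₗ acc) LinearMap.id) ψ ∧
      ((List.finRange M).foldl (fun acc m => stageOp U (σ m) ∘ₗ acc) LinearMap.id)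
          (PiTensorProduct.tprod ℂ (fun j : Fin N => if j = 0 then ψ else v)) =
        PiTensorProduct.tprod ℂ w := by
  suffices h : ∀ (L : List (Fin M)) (f : Fin N → H),
      ∃ w : Fin N → H,
        w 0 = ((L.foldl (fun acc m => U (i m) ∘ₗ acc) LinearMap.id) (f 0)) ∧
        ((L.foldl (fun acc m => stageOp U (σ m) ∘ₗ acc) LinearMap.id)
            (PiTensorProduct.tprod ℂ f)) = PiTensorProduct.tprod ℂ w by
    obtain ⟨w, hw0, hw⟩ := h (List.finRange M) (fun j : Fin N => if j = 0 then ψ else v)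
    exact ⟨w, by simpa using hw0, hw⟩
  intro L
  induction L with
  | nil => intro f; exact ⟨f, rfl, rfl⟩
  | cons x xs ih =>
      intro f
      obtain ⟨w, hw0, hw⟩ := ih (fun j => U (σ x j) (f j))
      refine ⟨w, ?_, ?_⟩
      · rw [hw0]
        simp only [List.foldl_cons]
        rw [hσ x, foldl_comp_eq (fun m => U (i m)) xs (U (i x) ∘ₗ LinearMap.id)]
        simp
      · simp only [List.foldl_cons] at *
        rw [foldl_comp_eq (fun m => stageOp U (σ m))]
        simpa [stageOp_tprod] using hw
end

section
/- Let n ≥ 1 and let i be a natural number with i < 2^n. For each k ∈ {0, 1, …, n−1} let d_k = (i / 2^{n−1−k}) mod 2 be the k-th most significant binary digit of i, let p_k = 2^{n−k} · (i / 2^{n−k}) (integer division; p_k is i with its lowest n−k binary digits set to 0), and let τ_k be the permutation of Fin (2^n) that is the transposition exchanging p_k and p_k + 2^{n−1−k} when d_k = 1, and the identity when d_k = 0. Then the composition τ_{n−1} ∘ τ_{n−2} ∘ ⋯ ∘ τ_0 (with τ_0 applied first) maps 0 to i. -/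
/-- `bitd n i k` is the `k`-th most significant binary digit of `i < 2^n`. -/
def bitd (n i k : ℕ) : ℕ := (i / 2 ^ (n - 1 - k)) % 2

/-- `pref n i k` is `i` with its lowest `n - k` binary digits set to `0`,
i.e. `2^(n-k) * (i / 2^(n-k))`. -/
def pref (n i k : ℕ) : ℕ := 2 ^ (n - k) * (i / 2 ^ (n - k))

theorem pref_le (n i k : ℕ) : pref n i k ≤ i := by
  unfold pref
  rw [mul_comm]
  exact Nat.div_mul_le_self _ _

theorem pref_lt (n i k : ℕ) (hi : i < 2 ^ n) : pref n i k < 2 ^ n :=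
  lt_of_le_of_lt (pref_le n i k) hi

theorem pref_add_lt (n i k : ℕ) (hk : k < n) (hi : i < 2 ^ n) :
    pref n i k + 2 ^ (n - 1 - k) < 2 ^ n := by
  have hq : i / 2 ^ (n - k) < 2 ^ k := by
    rw [Nat.div_lt_iff_lt_mul (pow_pos (by norm_num : (0:ℕ) < 2) _)]
    calc i < 2 ^ n := hi
      _ = 2 ^ k * 2 ^ (n - k) := by rw [← pow_add]; congr 1; omega
  have hlt : 2 ^ (n - 1 - k) < 2 ^ (n - k) :=
    Nat.pow_lt_pow_right (by norm_num) (by omega)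
  calc pref n i k + 2 ^ (n - 1 - k)
      < 2 ^ (n - k) * (i / 2 ^ (n - k)) + 2 ^ (n - k) := by unfold pref; omega
    _ = 2 ^ (n - k) * (i / 2 ^ (n - k) + 1) := by ring
    _ ≤ 2 ^ (n - k) * 2 ^ k := Nat.mul_le_mul_left _ (by omega)
    _ = 2 ^ n := by rw [← pow_add]; congr 1; omega

/-- The `k`-th controlled swap of the routing network: the transposition of `Fin (2^n)`
exchanging `pref n i k` and `pref n i k + 2^(n-1-k)` when the `k`-th most significant bit
of `i` is `1`, and the identity when it is `0`. -/
noncomputable def routeSwap (n i : ℕ) (hi : i < 2 ^ n) (k : ℕ) (hk : k < n) :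
    Equiv.Perm (Fin (2 ^ n)) :=
  if bitd n i k = 1 then
    Equiv.swap ⟨pref n i k, pref_lt n i k hi⟩
      ⟨pref n i k + 2 ^ (n - 1 - k), pref_add_lt n i k hk hi⟩
  else 1

lemma pref_zero (n i : ℕ) (hi : i < 2 ^ n) : pref n i 0 = 0 := by
  unfold pref
  rw [Nat.div_eq_of_lt (by simpa using hi)]
  simp

lemma pref_self (n i : ℕ) : pref n i n = i := by
  unfold pref; simp

lemma pref_succ (n i k : ℕ) (hk : k < n) :
    pref n i (k + 1) = pref n i k + bitd n i k * 2 ^ (n - 1 - k) := by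
  unfold pref bitd
  have h1 : n - (k + 1) = n - 1 - k := by omega
  have h2 : n - k = (n - 1 - k) + 1 := by omega
  rw [h1, h2]
  have hdd : i / 2 ^ (n - 1 - k + 1) = i / 2 ^ (n - 1 - k) / 2 := by
    rw [pow_succ, Nat.div_div_eq_div_mul]
  rw [hdd, pow_succ]
  set q := i / 2 ^ (n - 1 - k) with hqdef
  have hq : q = 2 * (q / 2) + q % 2 := by omega
  nth_rewrite 1 [hq]
  ring

lemma foldl_mul_apply {X : Type*} {A : Type*} (s : A → Equiv.Perm X)
    (l : List A) (g : Equiv.Perm X) (x : X) :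
    (l.foldl (fun acc k => s k * acc) g) x
      = (l.foldl (fun acc k => s k * acc) 1) (g x) := by
  induction l generalizing g x with
  | nil => simp
  | cons a l ih =>
    simp only [List.foldl_cons]
    rw [ih, ih (s a * 1)]
    simp

lemma routeSwap_apply (n i : ℕ) (hi : i < 2 ^ n) (k : ℕ) (hk : k < n)
    (h1 : pref n i k < 2 ^ n) (h2 : pref n i (k + 1) < 2 ^ n) :
    routeSwap n i hi k hk ⟨pref n i k, h1⟩ = ⟨pref n i (k + 1), h2⟩ := by
  unfold routeSwap
  have hb : bitd n i k = 0 ∨ bitd n i k = 1 := by unfold bitd; omega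
  have hstep := pref_succ n i k hk
  rcases hb with hb | hb
  · rw [hb, if_neg (by norm_num : ¬ (0 : ℕ) = 1)]
    simp only [Equiv.Perm.one_apply]
    apply Fin.ext
    show pref n i k = pref n i (k + 1)
    rw [hb] at hstep; omega
  · rw [hb]
    simp only [if_pos rfl]
    have : (⟨pref n i (k + 1), h2⟩ : Fin (2 ^ n))
        = ⟨pref n i k + 2 ^ (n - 1 - k), pref_add_lt n i k hk hi⟩ := by
      apply Fin.ext
      show pref n i (k + 1) = pref n i k + 2 ^ (n - 1 - k)
      rw [hb] at hstep; omega
    rw [this]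
    exact Equiv.swap_apply_left _ _

/-- The cascade of controlled swaps `τ_{n-1} ∘ ⋯ ∘ τ_1 ∘ τ_0` (with `τ_0` applied first),
where `τ_k` swaps `pref n i k` with `pref n i k + 2^(n-1-k)` precisely when the `k`-th most
significant bit of `i` is `1`, routes the data from register `0` to register `i`. -/
theorem routing_swaps_reach (n : ℕ) (hn : 1 ≤ n) (i : ℕ) (hi : i < 2 ^ n) :
    ((List.finRange n).foldl (fun acc k => routeSwap n i hi k.val k.isLt * acc) 1)
        ⟨0, pow_pos (by norm_num) n⟩ = ⟨i, hi⟩ := by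
  have key : ∀ j m, m + j = n → ∀ (h : pref n i m < 2 ^ n),
      (((List.finRange n).drop m).foldl
        (fun acc k => routeSwap n i hi k.val k.isLt * acc) 1) ⟨pref n i m, h⟩ = ⟨i, hi⟩ := by
    intro j
    induction j with
    | zero =>
      intro m hm h
      have : m = n := by omega
      subst this
      rw [List.drop_eq_nil_of_le (by simp)]
      simp only [List.foldl_nil, Equiv.Perm.one_apply]
      exact Fin.ext (pref_self _ i)
    | succ j ih =>
      intro m hm h
      have hmn : m < n := by omega
      have hdrop : (List.finRange n).drop m
          = (⟨m, by simpa using hmn⟩ : Fin n) :: (List.finRange n).drop (m + 1) := by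
        rw [List.drop_eq_getElem_cons (by simpa using hmn)]
        congr 1
        simp [List.getElem_finRange]
      rw [hdrop, List.foldl_cons, foldl_mul_apply]
      have h2 : pref n i (m + 1) < 2 ^ n := pref_lt n i (m + 1) hi
      have : ((routeSwap n i hi m hmn * 1) ⟨pref n i m, h⟩ : Fin (2 ^ n))
          = ⟨pref n i (m + 1), h2⟩ := by
        simp only [mul_one]
        exact routeSwap_apply n i hi m hmn h h2
      rw [this]
      exact ih (m + 1) (by omega) h2
  have h0 : pref n i 0 < 2 ^ n := pref_lt n i 0 hi
  have := key n 0 (by omega) h0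
  rw [List.drop_zero] at this
  have hz : (⟨0, pow_pos (by norm_num) n⟩ : Fin (2 ^ n)) = ⟨pref n i 0, h0⟩ :=
    Fin.ext (pref_zero n i hi).symm
  rw [hz]
  exact this
end

section
/- Let N ≥ 1. For 1 ≤ i ≤ N−1 let s_i denote the transposition of Fin N exchanging i−1 and i. Given a family of booleans b indexed by pairs (k, i) with 1 ≤ i ≤ k ≤ N−1, define the layer permutation L_k(b) = (s_1 if b_{k,1} else id) ∘ (s_2 if b_{k,2} else id) ∘ ⋯ ∘ (s_k if b_{k,k} else id) (with the factor for i = k applied first), and define Π(b) = L_{N−1}(b) ∘ L_{N−2}(b) ∘ ⋯ ∘ L_1(b) (with L_1 applied first). Then the map b ↦ Π(b), from boolean assignments on the N(N−1)/2 switch positions to permutations of Fin N, is surjective: every permutation of Fin N equals Π(b) for some assignment of the switch controls b. -/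
/-- The adjacent transposition `s_i` of `Fin N` exchanging `i - 1` and `i`,
for `1 ≤ i ≤ N - 1` (and the identity for `i` out of this range). -/
def adjSwap (N i : ℕ) : Equiv.Perm (Fin N) :=
  if h : 1 ≤ i ∧ i ≤ N - 1 then
    Equiv.swap ⟨i - 1, by omega⟩ ⟨i, by omega⟩
  else 1

/-- The `k`-th layer of the quantum-switch network with boolean controls `b`:
`L_k(b) = (s_1 if b k 1 else id) ∘ (s_2 if b k 2 else id) ∘ ⋯ ∘ (s_k if b k k else id)`,
the factor for `i = k` being applied first. -/
def switchLayer (N : ℕ) (b : ℕ → ℕ → Bool) (k : ℕ) : Equiv.Perm (Fin N) :=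
  ((List.range' 1 k).map (fun i => if b k i then adjSwap N i else 1)).prod

/-- The full staircase network of `N(N-1)/2` binary-controlled switches:
`Π(b) = L_{N-1}(b) ∘ L_{N-2}(b) ∘ ⋯ ∘ L_1(b)`, with `L_1` applied first. -/
def switchNetwork (N : ℕ) (b : ℕ → ℕ → Bool) : Equiv.Perm (Fin N) :=
  (((List.range' 1 (N - 1)).map (fun k => switchLayer N b k)).reverse).prod

lemma prod_apply_fixed {N : ℕ} (l : List (Equiv.Perm (Fin N))) (x : Fin N)
    (h : ∀ p ∈ l, p x = x) : l.prod x = x := by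
  induction l with
  | nil => simp
  | cons a l ih =>
    simp only [List.prod_cons, Equiv.Perm.mul_apply]
    rw [ih (fun p hp => h p (List.mem_cons_of_mem _ hp)), h a List.mem_cons_self]

lemma adjSwap_apply_of_lt {N i : ℕ} (x : Fin N) (h : i < x.val) : adjSwap N i x = x := by
  unfold adjSwap
  split
  · exact Equiv.swap_apply_of_ne_of_ne
      (fun he => by have := congrArg Fin.val he; simp at this; omega)
      (fun he => by have := congrArg Fin.val he; simp at this; omega)
  · rfl

lemma switchLayer_apply_of_lt {N : ℕ} (b : ℕ → ℕ → Bool) (k : ℕ) (x : Fin N)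
    (h : k < x.val) : switchLayer N b k x = x := by
  apply prod_apply_fixed
  intro p hp
  simp only [List.mem_map] at hp
  obtain ⟨i, hi, rfl⟩ := hp
  rw [List.mem_range'_1] at hi
  split
  · exact adjSwap_apply_of_lt x (by omega)
  · rfl

lemma pass_apply {N : ℕ} : ∀ (len a : ℕ) (ha : 1 ≤ a) (hlen : a + len ≤ N),
    (((List.range' a len).map (adjSwap N)).prod) ⟨a + len - 1, by omega⟩
      = ⟨a - 1, by omega⟩ := by
  intro len
  induction len with
  | zero =>
    intro a ha hlen
    simp
  | succ len ih =>
    intro a ha hlen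
    rw [List.range'_succ, List.map_cons, List.prod_cons, Equiv.Perm.mul_apply]
    have h1 : (⟨a + (len + 1) - 1, by omega⟩ : Fin N) = ⟨a + 1 + len - 1, by omega⟩ :=
      Fin.ext (show a + (len + 1) - 1 = a + 1 + len - 1 by omega)
    rw [h1, ih (a + 1) (by omega) (by omega)]
    have h2 : (⟨a + 1 - 1, by omega⟩ : Fin N) = ⟨a, by omega⟩ :=
      Fin.ext (show a + 1 - 1 = a by omega)
    rw [h2]
    unfold adjSwap
    rw [dif_pos ⟨ha, by omega⟩]
    exact Equiv.swap_apply_right _ _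

lemma layer_congr {N k : ℕ} {b b' : ℕ → ℕ → Bool} (h : ∀ i, b k i = b' k i) :
    switchLayer N b k = switchLayer N b' k := by
  unfold switchLayer
  congr 1
  exact List.map_congr_left (fun i _ => by rw [h i])

lemma layer_eq {N k j : ℕ} (b : ℕ → ℕ → Bool) (hb : ∀ i, b k i = decide (j < i))
    (hj : j ≤ k) :
    switchLayer N b k = ((List.range' (j+1) (k-j)).map (adjSwap N)).prod := by
  unfold switchLayer
  have hsplit : List.range' 1 k = List.range' 1 j ++ List.range' (1 + j) (k - j) := by
    have h0 : List.range' 1 j ++ List.range' (1 + 1 * j) (k - j) 1 = List.range' 1 (j + (k - j)) 1 :=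
      List.range'_append
    simp only [one_mul] at h0
    rw [h0]
    congr 1
    omega
  rw [hsplit, List.map_append, List.prod_append]
  have h1 : ((List.range' 1 j).map fun i => if b k i then adjSwap N i else 1).prod = 1 := by
    apply List.prod_eq_one
    intro p hp
    simp only [List.mem_map] at hp
    obtain ⟨i, hi, rfl⟩ := hp
    rw [List.mem_range'_1] at hi
    rw [hb i, if_neg (by simp; omega)]
  rw [h1, one_mul]
  congr 1
  have h2 : 1 + j = j + 1 := by omega
  rw [h2]
  apply List.map_congr_left
  intro i hi
  rw [List.mem_range'_1] at hi
  rw [hb i, if_pos (by simp; omega)]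

lemma net_aux {N : ℕ} : ∀ m, m ≤ N - 1 → ∀ π : Equiv.Perm (Fin N),
    (∀ x : Fin N, m + 1 ≤ x.val → π x = x) →
    ∃ b, (((List.range' 1 m).map (fun k => switchLayer N b k)).reverse).prod = π := by
  intro m
  induction m with
  | zero =>
    intro _ π hπ
    refine ⟨fun _ _ => false, ?_⟩
    simp only [List.range'_zero, List.map_nil, List.reverse_nil, List.prod_nil]
    ext x
    simp only [Equiv.Perm.coe_one, id_eq]
    by_cases hx : 1 ≤ x.val
    · exact congrArg Fin.val (hπ x hx).symm
    · by_cases h1 : 1 ≤ (π x).val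
      · have h2 := hπ (π x) h1
        have h3 := π.injective h2
        rw [h3] at h1
        omega
      · omega
  | succ m ih =>
    intro hm π hπ
    have hm' : m ≤ N - 1 := by omega
    have hN2 : m + 1 < N := by omega
    have hjle : (π ⟨m + 1, hN2⟩).val ≤ m + 1 := by
      by_contra h
      push_neg at h
      have h2 := hπ (π ⟨m + 1, hN2⟩) (by omega)
      have h3 := π.injective h2
      have h4 : (π ⟨m + 1, hN2⟩).val = m + 1 := congrArg Fin.val h3
      omega
    set j := (π ⟨m + 1, hN2⟩).val with hjdef
    set L := switchLayer N (fun _ i => decide (j < i)) (m + 1) with hLdef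
    have hL : L = ((List.range' (j+1) (m+1-j)).map (adjSwap N)).prod :=
      layer_eq _ (fun i => rfl) hjle
    have hLtop : L ⟨m + 1, hN2⟩ = π ⟨m + 1, hN2⟩ := by
      have hp := pass_apply (N := N) (m + 1 - j) (j + 1) (by omega) (by omega)
      obtain ⟨v, hv, w, hw, hpvw⟩ :
          ∃ v : Fin N, v.val = (j + 1) + (m + 1 - j) - 1 ∧ ∃ w : Fin N, w.val = j + 1 - 1 ∧
            (((List.range' (j + 1) (m + 1 - j)).map (adjSwap N)).prod) v = w :=
        ⟨_, rfl, _, rfl, hp⟩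
      have hv2 : v = ⟨m + 1, hN2⟩ := Fin.ext (show v.val = m + 1 by omega)
      have hw2 : w = π ⟨m + 1, hN2⟩ := Fin.ext (by omega)
      rw [hv2, hw2] at hpvw
      rw [hL]
      exact hpvw
    have hLhigh : ∀ x : Fin N, m + 2 ≤ x.val → L x = x := fun x hx =>
      switchLayer_apply_of_lt _ _ _ (by omega)
    set σ := L⁻¹ * π with hσdef
    have hσ : ∀ x : Fin N, m + 1 ≤ x.val → σ x = x := by
      intro x hx
      rcases Nat.lt_or_ge (m + 1) x.val with h | h
      · have h1 : π x = x := hπ x (by omega)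
        have h2 : L x = x := hLhigh x (by omega)
        simp only [hσdef, Equiv.Perm.mul_apply, h1]
        rw [Equiv.Perm.inv_def, Equiv.symm_apply_eq, h2]
      · have hx1 : x = ⟨m + 1, hN2⟩ := Fin.ext (show x.val = m + 1 by omega)
        subst hx1
        simp only [hσdef, Equiv.Perm.mul_apply, ← hLtop]
        rw [Equiv.Perm.inv_def, Equiv.symm_apply_apply]
    obtain ⟨b', hb'⟩ := ih hm' σ hσ
    refine ⟨fun k i => if k = m + 1 then decide (j < i) else b' k i, ?_⟩
    have hrange : List.range' 1 (m + 1) = List.range' 1 m ++ [m + 1] := by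
      have h : 1 + 1 * m = m + 1 := by omega
      rw [List.range'_concat, h]
    rw [hrange, List.map_append, List.reverse_append, List.map_cons, List.map_nil]
    simp only [List.reverse_cons, List.reverse_nil, List.nil_append, List.singleton_append,
      List.prod_cons]
    have hlayertop : switchLayer N (fun k i => if k = m + 1 then decide (j < i) else b' k i)
        (m + 1) = L := layer_congr (fun i => by simp)
    have hrest : (List.range' 1 m).map
          (fun k => switchLayer N (fun k i => if k = m + 1 then decide (j < i) else b' k i) k)
        = (List.range' 1 m).map (fun k => switchLayer N b' k) := by
      apply List.map_congr_left
      intro k hk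
      rw [List.mem_range'_1] at hk
      exact layer_congr (fun i => by rw [if_neg (by omega)])
    rw [hlayertop, hrest, hb', hσdef]
    group

/-- The staircase network of quantum switches can be programmed to realize every
permutation of `Fin N`: the map `b ↦ Π(b)` from boolean control assignments to
permutations is surjective. -/
theorem switchNetwork_surjective (N : ℕ) (hN : 1 ≤ N) (π : Equiv.Perm (Fin N)) :
    ∃ b : ℕ → ℕ → Bool, switchNetwork N b = π := by
  exact net_aux (N - 1) le_rfl π (fun x hx => absurd x.isLt (by omega))
end
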